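/- For even q with 2 ≤ q ≤ M and even M ≥ 2, and any θ > 0, the quantity (q−1)!!(M+q−2)!!/((Mθ)^q (M−2)!!) is at most q² (8q/(e M θ²))^{q/2}; in particular, choosing q to be the smallest even integer ≥ Mθ²/8 gives the bound (Mθ²/8)² · e^{−Mθ²/16} (up to adjusting constants for the rounding of q). -/

import Mathlib

open Finset

lemma odd_df_le (j : ℕ) : ((2*j+1).doubleFactorial) ≤ (2*j+2)^(j+1) := by
  induction j with
  | zero => simp [Nat.doubleFactorial]
  | succ n ih =>
    have h : 2*(n+1)+1 = (2*n+1)+2 := by ring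
    rw [h, Nat.doubleFactorial_add_two]
    calc (2*n+1+2) * (2*n+1).doubleFactorial ≤ (2*(n+1)+2) * (2*n+2)^(n+1) :=
          Nat.mul_le_mul (by omega) ih
      _ ≤ (2*(n+1)+2) * (2*(n+1)+2)^(n+1) :=
          Nat.mul_le_mul_left _ (Nat.pow_le_pow_left (by omega) _)
      _ = (2*(n+1)+2)^(n+1+1) := by ring

lemma even_df_ratio (m : ℕ) : ∀ k, 2*k ≤ m+2 →
    (m+2*k).doubleFactorial ≤ (2*(m+2))^k * m.doubleFactorial := by
  intro k
  induction k with
  | zero => intro _; simp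
  | succ n ih =>
    intro h
    have h2 : m + 2*(n+1) = (m+2*n) + 2 := by ring
    rw [h2, Nat.doubleFactorial_add_two]
    calc (m+2*n+2) * (m+2*n).doubleFactorial
        ≤ (2*(m+2)) * ((2*(m+2))^n * m.doubleFactorial) :=
          Nat.mul_le_mul (by omega) (ih (by omega))
      _ = (2*(m+2))^(n+1) * m.doubleFactorial := by ring

/-- For even `q` with `2 ≤ q ≤ M`, even `M`, and `θ > 0`,
`(q-1)!! (M+q-2)!! / ((Mθ)^q (M-2)!!) ≤ q² (8q/(e M θ²))^{q/2}`. -/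
theorem double_factorial_moment_bound (q M : ℕ) (hq2 : 2 ≤ q) (hqM : q ≤ M)
    (hqe : Even q) (hMe : Even M) (θ : ℝ) (hθ : 0 < θ) :
    ((q - 1).doubleFactorial * (M + q - 2).doubleFactorial : ℝ) /
        (((M : ℝ) * θ) ^ q * ((M - 2).doubleFactorial : ℝ))
      ≤ (q : ℝ) ^ 2 * (8 * q / (Real.exp 1 * M * θ ^ 2)) ^ (q / 2) := by
  obtain ⟨c, hc⟩ := hqe
  set k := q / 2 with hkdef
  have hkq : q = 2 * k := by omega
  have hk1 : 1 ≤ k := by omega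
  set m := M - 2 with hmdef
  have hM2 : 2 ≤ M := le_trans hq2 hqM
  -- natural number bounds
  have hn1 : (q - 1).doubleFactorial ≤ q ^ k := by
    have := odd_df_le (k - 1)
    have e1 : 2*(k-1)+1 = q - 1 := by omega
    have e2 : 2*(k-1)+2 = q := by omega
    have e3 : (k-1)+1 = k := by omega
    rwa [e1, e2, e3] at this
  have hn2 : (M + q - 2).doubleFactorial ≤ (2*M)^k * (M-2).doubleFactorial := by
    have := even_df_ratio m k (by omega)
    have e1 : m + 2*k = M + q - 2 := by omega
    have e2 : 2*(m+2) = 2*M := by omega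
    rwa [e1, e2, hmdef] at this
  -- real positivity facts
  have hM0 : (0:ℝ) < (M:ℝ) := by exact_mod_cast (by omega : 0 < M)
  have hd : (0:ℝ) < ((M-2).doubleFactorial : ℝ) := by
    exact_mod_cast Nat.doubleFactorial_pos _
  have hP : (0:ℝ) < ((M:ℝ)*θ)^q := by positivity
  have hq0 : (0:ℝ) < (q:ℝ) := by exact_mod_cast (by omega : 0 < q)
  have he4 : Real.exp 1 ≤ 4 := by
    have := Real.exp_one_lt_d9; linarith
  have hep : (0:ℝ) < Real.exp 1 := Real.exp_pos 1
  calc ((q - 1).doubleFactorial * (M + q - 2).doubleFactorial : ℝ) /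
        (((M : ℝ) * θ) ^ q * ((M - 2).doubleFactorial : ℝ))
      ≤ ((q:ℝ)^k * ((2*(M:ℝ))^k * ((M-2).doubleFactorial : ℝ))) /
        (((M : ℝ) * θ) ^ q * ((M - 2).doubleFactorial : ℝ)) := by
        gcongr
        · exact_mod_cast hn1
        · exact_mod_cast hn2
    _ = (2*(q:ℝ)/((M:ℝ)*θ^2))^k := by
        rw [hkq]
        have hdne : ((M-2).doubleFactorial : ℝ) ≠ 0 := ne_of_gt hd
        have hMne : (M:ℝ) ≠ 0 := ne_of_gt hM0
        have hθne : θ ≠ 0 := ne_of_gt hθ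
        field_simp
        ring_nf
        rw [pow_mul (M:ℝ) k 2, inv_pow, inv_pow]
        have hMk : (M:ℝ)^k ≠ 0 := pow_ne_zero _ hMne
        have hθk : θ^(k*2) ≠ 0 := pow_ne_zero _ hθne
        field_simp
    _ ≤ (8*(q:ℝ)/(Real.exp 1 * (M:ℝ) * θ^2))^k := by
        apply pow_le_pow_left₀ (by positivity)
        rw [div_le_div_iff₀ (by positivity) (by positivity)]
        have h1 : (0:ℝ) ≤ (q:ℝ)*((M:ℝ)*θ^2) := by positivity
        nlinarith [mul_nonneg (by linarith : (0:ℝ) ≤ 4 - Real.exp 1) h1]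
    _ ≤ (q : ℝ) ^ 2 * (8 * q / (Real.exp 1 * M * θ ^ 2)) ^ k := by
        apply le_mul_of_one_le_left (by positivity)
        nlinarith [show (2:ℝ) ≤ (q:ℝ) by exact_mod_cast hq2]
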